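/- The coproduct of the quantum algebra U_τ(so(2,2)), defined on generators by Δ(H)=1⊗H+H⊗1, Δ(P)=1⊗P+P⊗e^{τH}, Δ(D)=1⊗D+D⊗e^{-τH}, Δ(C1)=1⊗C1+C1⊗e^{-τH}, Δ(K)=1⊗K+K⊗1-τD⊗e^{-τH}P, Δ(C2)=1⊗C2+C2⊗e^{-τH}+2τD⊗e^{-τH}K-τ²D(D+1)⊗e^{-2τH}P, is coassociative on the generators: (Δ⊗id)∘Δ(X) = (id⊗Δ)∘Δ(X) for X ∈ {H, P, D, C1, K, C2}. -/

import Mathlib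

set_option maxHeartbeats 1000000


open scoped TensorProduct

/-- Coassociativity of the coproduct of U_τ(so(2,2)) on the generators.
We work in an associative ℝ-algebra `A` (the deformed enveloping algebra) with
generators H, P, K, D, C1, C2 and invertible elements Ep, Em playing the role of
the formal power series e^{τH}, e^{-τH} (so Ep·Em = Em·Ep = 1 and both commute
with H).  The deformed relations are assumed (with the τ-divided ones written in
multiplied form, e.g. τ[K,P] = e^{τH}-1), and Δ : A → A⊗A is an algebra
homomorphism taking the stated values on the generators, with
Δ(e^{±τH}) = e^{±τH}⊗e^{±τH} (a consequence of H being primitive).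
Conclusion: (Δ⊗id)∘Δ = (id⊗Δ)∘Δ on each of H, P, D, C1, K, C2. -/
theorem Uso22_coproduct_coassociative
    (A : Type*) [Ring A] [Algebra ℝ A] (τ : ℝ)
    (H P K D C1 C2 Ep Em : A)
    (hEpEm : Ep * Em = 1) (hEmEp : Em * Ep = 1)
    (hHEp : H * Ep = Ep * H) (hHEm : H * Em = Em * H)
    -- the deformed commutation relations of U_τ(so(2,2))
    (hKH : K * H - H * K = Em * P)
    (hKP : τ • (K * P - P * K) = Ep - 1)
    (hHP : H * P - P * H = 0)
    (hDH : τ • (D * H - H * D) = 1 - Em)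
    (hDC1 : D * C1 - C1 * D = -C1 + τ • (D * D))
    (hHC1 : H * C1 - C1 * H = (-2 : ℝ) • D)
    (hDP : D * P - P * D = P)
    (hDC2 : D * C2 - C2 * D = -C2)
    (hPC2 : P * C2 - C2 * P = (2 : ℝ) • D)
    (hKC1 : K * C1 - C1 * K = C2)
    (hKC2 : K * C2 - C2 * K = C1 - τ • (D * D))
    (hC1C2 : C1 * C2 - C2 * C1 = -τ • (D * C2 + C2 * D))
    (hHC2 : H * C2 - C2 * H = Em * K + K * Em)
    (hPC1 : P * C1 - C1 * P = (-2 : ℝ) • K - τ • (D * P + P * D))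
    (hKD : K * D - D * K = 0)
    -- the coproduct
    (Δ : A →ₐ[ℝ] A ⊗[ℝ] A)
    (hΔH : Δ H = 1 ⊗ₜ[ℝ] H + H ⊗ₜ[ℝ] 1)
    (hΔP : Δ P = 1 ⊗ₜ[ℝ] P + P ⊗ₜ[ℝ] Ep)
    (hΔD : Δ D = 1 ⊗ₜ[ℝ] D + D ⊗ₜ[ℝ] Em)
    (hΔC1 : Δ C1 = 1 ⊗ₜ[ℝ] C1 + C1 ⊗ₜ[ℝ] Em)
    (hΔK : Δ K = 1 ⊗ₜ[ℝ] K + K ⊗ₜ[ℝ] 1 - τ • (D ⊗ₜ[ℝ] (Em * P)))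
    (hΔC2 : Δ C2 = 1 ⊗ₜ[ℝ] C2 + C2 ⊗ₜ[ℝ] Em + (2 * τ) • (D ⊗ₜ[ℝ] (Em * K))
      - (τ ^ 2) • ((D * (D + 1)) ⊗ₜ[ℝ] (Em * Em * P)))
    (hΔEp : Δ Ep = Ep ⊗ₜ[ℝ] Ep) (hΔEm : Δ Em = Em ⊗ₜ[ℝ] Em) :
    ∀ X ∈ ({H, P, D, C1, K, C2} : Set A),
      (Algebra.TensorProduct.assoc ℝ ℝ ℝ A A A)
          ((Algebra.TensorProduct.map Δ (AlgHom.id ℝ A)) (Δ X))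
        = (Algebra.TensorProduct.map (AlgHom.id ℝ A) Δ) (Δ X) := by
  intro X hX
  have hEmEp' : ∀ x : A, Em * (Ep * x) = x := fun x => by rw [← mul_assoc, hEmEp, one_mul]
  have hEpEm' : ∀ x : A, Ep * (Em * x) = x := fun x => by rw [← mul_assoc, hEpEm, one_mul]
  have hKD' : K * D = D * K := by rwa [sub_eq_zero] at hKD
  have hDP' : D * P = P + P * D := sub_eq_iff_eq_add.mp hDP
  have key : D * (K * P - P * K) - (K * P - P * K) * D = K * P - P * K := by
    have e1 : D * (K * P) = K * P * D + K * P := by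
      calc D * (K * P) = (D * K) * P := by rw [mul_assoc]
      _ = K * (D * P) := by rw [← hKD', mul_assoc]
      _ = K * (P + P * D) := by rw [hDP']
      _ = K * P * D + K * P := by noncomm_ring
    have e2 : D * (P * K) = P * K * D + P * K := by
      calc D * (P * K) = (D * P) * K := by rw [mul_assoc]
      _ = (P + P * D) * K := by rw [hDP']
      _ = P * K + P * (D * K) := by noncomm_ring
      _ = P * K + P * (K * D) := by rw [hKD']
      _ = P * K * D + P * K := by noncomm_ring
    rw [mul_sub, e1, e2]; noncomm_ring
  have hDEp : D * Ep - Ep * D = Ep - 1 := by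
    calc D * Ep - Ep * D = D * (Ep - 1) - (Ep - 1) * D := by noncomm_ring
    _ = D * (τ • (K * P - P * K)) - (τ • (K * P - P * K)) * D := by rw [hKP]
    _ = τ • (D * (K * P - P * K) - (K * P - P * K) * D) := by
        rw [mul_smul_comm, smul_mul_assoc, smul_sub]
    _ = τ • (K * P - P * K) := by rw [key]
    _ = Ep - 1 := hKP
  have h3 : Ep * D = D * Ep - (Ep - 1) := by rw [← hDEp]; noncomm_ring
  have hEpDEm : Ep * (D * Em) = D - 1 + Em := by
    calc Ep * (D * Em) = (Ep * D) * Em := by rw [mul_assoc]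
    _ = (D * Ep - (Ep - 1)) * Em := by rw [h3]
    _ = D * (Ep * Em) - Ep * Em + Em := by noncomm_ring
    _ = D - 1 + Em := by rw [hEpEm, mul_one]
  have hDEm : D * Em = Em * D - Em + Em * Em := by
    calc D * Em = Em * (Ep * (D * Em)) := by rw [hEmEp']
    _ = Em * (D - 1 + Em) := by rw [hEpDEm]
    _ = Em * D - Em + Em * Em := by rw [mul_add, mul_sub, mul_one]
  have hDEm' : ∀ x : A, D * (Em * x) = Em * (D * x) - Em * x + Em * (Em * x) := fun x => by
    rw [← mul_assoc, hDEm]; noncomm_ring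
  simp only [Set.mem_insert_iff, Set.mem_singleton_iff] at hX
  rcases hX with rfl | rfl | rfl | rfl | rfl | rfl <;>
  · simp only [hΔH, hΔP, hΔD, hΔC1, hΔK, hΔC2, hΔEp, hΔEm, map_add, map_sub, map_smul,
      map_one, map_mul, Algebra.TensorProduct.map_tmul, AlgHom.coe_id, id_eq,
      Algebra.TensorProduct.one_def, Algebra.TensorProduct.tmul_mul_tmul,
      TensorProduct.add_tmul, TensorProduct.tmul_add, TensorProduct.sub_tmul,
      TensorProduct.tmul_sub, ← TensorProduct.smul_tmul', TensorProduct.tmul_smul,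
      smul_add, smul_sub, Algebra.TensorProduct.assoc_tmul]
    try simp only [mul_add, add_mul, one_mul, mul_one, mul_assoc,
      hEpEm, hEmEp, hEpEm', hEmEp', hDEm, hDEm', mul_sub, sub_mul,
      Algebra.TensorProduct.tmul_mul_tmul, Algebra.TensorProduct.assoc_tmul,
      Algebra.TensorProduct.one_def, map_add, map_sub, map_smul,
      TensorProduct.add_tmul, TensorProduct.tmul_add, TensorProduct.sub_tmul,
      TensorProduct.tmul_sub, ← TensorProduct.smul_tmul', TensorProduct.tmul_smul,
      smul_add, smul_sub, smul_smul, mul_smul_comm, smul_mul_assoc]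
    module
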